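/- limsup over n of ln(g(n))/ln(n) equals 1, where g(n) is the number of odd coefficients of (1+x+x^2)^n. -/

import Mathlib

open Polynomial

/-- The number of odd coefficients of a polynomial over ℤ. -/
noncomputable def oddCoeffCount (p : Polynomial ℤ) : ℕ :=
  (p.support.filter fun j => Odd (p.coeff j)).card

noncomputable def g (n : ℕ) : ℕ := oddCoeffCount ((1 + X + X ^ 2) ^ n)

namespace Stmt13Aux

open Finset Filter Real

abbrev R := Polynomial (ZMod 2)

lemma frob (k : ℕ) : (1 + X + X ^ 2 : R) ^ 2 ^ k = 1 + X ^ 2 ^ k + (X ^ 2 ^ k) ^ 2 := by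
  induction k with
  | zero => simp
  | succ k ih =>
    have h2 : (2:ℕ) ^ (k+1) = 2 ^ k * 2 := by ring
    rw [h2, pow_mul, ih, CharTwo.add_sq, CharTwo.add_sq]
    ring

lemma cube_ne : (1 + X^3 : R) ≠ 0 := by
  intro h
  have := congrArg (fun p => Polynomial.coeff p 0) h
  simp at this

noncomputable def q (s : ℕ) : R :=
  (∑ i ∈ range (2*s+1), (X:R)^(3*i)) + X * (∑ i ∈ range s, (X:R)^(3*i))
    + X^(3*s+2) * (∑ i ∈ range s, (X:R)^(3*i))

lemma geom3 (n : ℕ) : (∑ i ∈ range n, (X:R)^(3*i)) * (1 + X^3) = X^(3*n) + 1 := by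
  have h := geom_sum_mul (X^3 : R) n
  rw [CharTwo.sub_eq_add, CharTwo.sub_eq_add] at h
  calc (∑ i ∈ range n, (X:R)^(3*i)) * (1 + X^3)
      = (∑ i ∈ range n, ((X:R)^3)^i) * (X^3 + 1) := by
        rw [add_comm]; congr 1; exact Finset.sum_congr rfl fun i _ => by rw [← pow_mul]
    _ = (X^3)^n + 1 := h
    _ = X^(3*n) + 1 := by rw [← pow_mul]

lemma key (s : ℕ) :
    q s * (1 + X^3) = (1 + X^(3*s+1) + (X^(3*s+1))^2) * (1+X) := by
  have h1 := geom3 (2*s+1)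
  have h2 := geom3 s
  unfold q
  calc _ = (∑ i ∈ range (2*s+1), (X:R)^(3*i)) * (1+X^3)
            + X * ((∑ i ∈ range s, (X:R)^(3*i)) * (1+X^3))
            + X^(3*s+2) * ((∑ i ∈ range s, (X:R)^(3*i)) * (1+X^3)) := by ring
    _ = (X^(3*(2*s+1)) + 1) + X * (X^(3*s) + 1) + X^(3*s+2) * (X^(3*s) + 1) := by rw [h1, h2]
    _ = (1 + X^(3*s+1) + (X^(3*s+1))^2) * (1+X) := by ring

lemma fmul : (1 + X + X ^ 2 : R) * (1 + X) = 1 + X ^ 3 := by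
  have h2 : (2 : R) = 0 := CharTwo.two_eq_zero
  linear_combination (X + X^2 : R) * h2

lemma main (s t : ℕ) (hs : 3*s+1 = 2^(2*t)) : (1+X+X^2 : R)^(3*s) = q s := by
  apply mul_right_cancel₀ cube_ne
  calc (1+X+X^2 : R)^(3*s) * (1+X^3)
      = (1+X+X^2 : R)^(3*s) * ((1+X+X^2) * (1+X)) := by rw [fmul]
    _ = (1+X+X^2 : R)^(3*s+1) * (1+X) := by ring
    _ = (1+X+X^2 : R)^(2^(2*t)) * (1+X) := by rw [hs]
    _ = (1 + X^(2^(2*t)) + (X^(2^(2*t)))^2) * (1+X) := by rw [frob]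
    _ = (1 + X^(3*s+1) + (X^(3*s+1))^2) * (1+X) := by rw [hs]
    _ = q s * (1+X^3) := (key s).symm

lemma coeff_q (s j : ℕ) (hj : j < 2*s+1) : (q s).coeff (3*j) = 1 := by
  unfold q
  rw [coeff_add, coeff_add]
  have e1 : (∑ i ∈ range (2*s+1), (X:R)^(3*i)).coeff (3*j) = 1 := by
    rw [finset_sum_coeff]
    rw [Finset.sum_eq_single j]
    · simp [coeff_X_pow]
    · intro i _ hij; rw [coeff_X_pow, if_neg (by omega)]
    · intro h; exact absurd (mem_range.mpr hj) h
  have e2 : (X * (∑ i ∈ range s, (X:R)^(3*i))).coeff (3*j) = 0 := by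
    rw [Finset.mul_sum, finset_sum_coeff]
    apply Finset.sum_eq_zero
    intro i _
    rw [← pow_succ', coeff_X_pow, if_neg (by omega)]
  have e3 : (X^(3*s+2) * (∑ i ∈ range s, (X:R)^(3*i))).coeff (3*j) = 0 := by
    rw [Finset.mul_sum, finset_sum_coeff]
    apply Finset.sum_eq_zero
    intro i _
    rw [← pow_add, coeff_X_pow, if_neg (by omega)]
  rw [e1, e2, e3]; ring

lemma card_q (s : ℕ) : 2*s+1 ≤ (q s).support.card := by
  have : (range (2*s+1)).card ≤ (q s).support.card := by
    apply Finset.card_le_card_of_injOn (fun j => 3*j)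
    · intro j hj
      rw [Finset.mem_coe, mem_support_iff, coeff_q s j (mem_range.mp hj)]
      exact one_ne_zero
    · intro a _ b _ h; simp only at h; omega
  simpa using this

lemma exists_s (t : ℕ) : ∃ s, 3*s+1 = 2^(2*t) := by
  induction t with
  | zero => exact ⟨0, rfl⟩
  | succ t ih =>
    obtain ⟨s, hs⟩ := ih
    refine ⟨4*s+1, ?_⟩
    have : (2:ℕ)^(2*(t+1)) = 4 * 2^(2*t) := by ring
    omega

lemma bridge (p : Polynomial ℤ) :
    oddCoeffCount p = (p.map (Int.castRingHom (ZMod 2))).support.card := by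
  unfold oddCoeffCount
  congr 1
  ext j
  simp only [mem_filter, mem_support_iff, coeff_map, eq_intCast]
  constructor
  · rintro ⟨h, hodd⟩
    rw [Ne, ZMod.intCast_zmod_eq_zero_iff_dvd]
    exact fun hd => (Int.not_even_iff_odd.mpr hodd) (even_iff_two_dvd.mpr hd)
  · intro h
    rw [Ne, ZMod.intCast_zmod_eq_zero_iff_dvd] at h
    exact ⟨fun h0 => h (h0 ▸ dvd_zero 2),
      Int.not_even_iff_odd.mp fun he => h (even_iff_two_dvd.mp he)⟩

lemma g_eq (n : ℕ) : g n = ((1 + X + X ^ 2 : R) ^ n).support.card := by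
  rw [g, bridge]
  congr 2
  rw [Polynomial.map_pow]
  simp

lemma g_le (n : ℕ) : g n ≤ 2 * n + 1 := by
  have h1 : g n ≤ ((1 + X + X ^ 2 : Polynomial ℤ) ^ n).support.card := by
    rw [g, oddCoeffCount]; exact Finset.card_filter_le _ _
  have hd : (1 + X + X ^ 2 : Polynomial ℤ).natDegree ≤ 2 := by compute_degree
  have h2 : ((1 + X + X ^ 2 : Polynomial ℤ) ^ n).natDegree ≤ 2 * n := by
    refine le_trans (natDegree_pow_le) ?_
    calc n * (1 + X + X ^ 2 : Polynomial ℤ).natDegree ≤ n * 2 :=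
          Nat.mul_le_mul_left n hd
      _ = 2 * n := by ring
  calc g n ≤ _ := h1
    _ ≤ ((1 + X + X ^ 2 : Polynomial ℤ) ^ n).natDegree + 1 :=
        card_supp_le_succ_natDegree _
    _ ≤ 2 * n + 1 := by omega

lemma g_pos (n : ℕ) : 1 ≤ g n := by
  rw [g_eq]
  have h0 : ((1 + X + X ^ 2 : R) ^ n).coeff 0 = 1 := by
    have h := map_pow (constantCoeff : R →+* ZMod 2) (1 + X + X^2) n
    have e : (constantCoeff : R →+* ZMod 2) (1 + X + X^2) = 1 := by simp
    rw [e, one_pow] at h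
    simpa [coeff_zero_eq_eval_zero, ← constantCoeff_apply] using h
  have : (0 : ℕ) ∈ ((1 + X + X ^ 2 : R) ^ n).support := by
    rw [mem_support_iff, h0]; exact one_ne_zero
  exact Finset.card_pos.mpr ⟨0, this⟩

lemma g_lower (s t : ℕ) (hs : 3*s+1 = 2^(2*t)) : 2*s+1 ≤ g (3*s) := by
  rw [g_eq, main s t hs]
  exact card_q s

noncomputable def f (n : ℕ) : ℝ := Real.log (g n) / Real.log n

lemma f_nonneg (n : ℕ) : 0 ≤ f n := by
  apply div_nonneg
  · apply Real.log_nonneg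
    exact_mod_cast g_pos n
  · rcases Nat.eq_zero_or_pos n with h | h
    · simp [h]
    · apply Real.log_nonneg; exact_mod_cast h

lemma log_nat_tendsto : Tendsto (fun n : ℕ => Real.log n) atTop atTop :=
  Real.tendsto_log_atTop.comp tendsto_natCast_atTop_atTop

lemma f_upper {n : ℕ} (hn : 3 ≤ n) : f n ≤ 1 + Real.log 3 / Real.log n := by
  have hlogn : 0 < Real.log n := by
    apply Real.log_pos; exact_mod_cast by omega
  have hgn : (g n : ℝ) ≤ 3 * n := by
    have := g_le n
    have : (g n : ℝ) ≤ 2 * n + 1 := by exact_mod_cast this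
    have hn1 : (1:ℝ) ≤ n := by exact_mod_cast (show 1 ≤ n by omega)
    linarith
  have h1 : Real.log (g n) ≤ Real.log (3 * n) := by
    apply Real.log_le_log (by exact_mod_cast g_pos n) hgn
  have h2 : Real.log (3 * n) = Real.log 3 + Real.log n := by
    rw [Real.log_mul (by norm_num) (by positivity)]
  rw [f, div_le_iff₀ hlogn]
  calc Real.log (g n) ≤ Real.log 3 + Real.log n := h2 ▸ h1
    _ = (1 + Real.log 3 / Real.log n) * Real.log n := by field_simp; ring

lemma f_bddAbove : ∀ᶠ n in atTop, f n ≤ 2 := by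
  filter_upwards [eventually_ge_atTop 3] with n hn
  have h := f_upper hn
  have hlogn : Real.log 3 ≤ Real.log n := by
    apply Real.log_le_log (by norm_num); exact_mod_cast hn
  have h3 : 0 < Real.log 3 := Real.log_pos (by norm_num)
  have : Real.log 3 / Real.log n ≤ 1 := by
    rw [div_le_one (lt_of_lt_of_le h3 hlogn)]; exact hlogn
  linarith

lemma f_lower {s : ℕ} (hs1 : 1 ≤ s) (hg : 2*s+1 ≤ g (3*s)) :
    1 + Real.log (2/3) / Real.log (3*s : ℕ) ≤ f (3*s) := by
  have h3s : (3:ℝ) ≤ (3*s : ℕ) := by exact_mod_cast Nat.le_mul_of_pos_right 3 hs1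
  have hlog : 0 < Real.log ((3*s : ℕ) : ℝ) := Real.log_pos (by linarith)
  have hkey : Real.log (2/3) + Real.log ((3*s:ℕ):ℝ) ≤ Real.log (g (3*s)) := by
    have h1 : Real.log (2/3) + Real.log ((3*s:ℕ):ℝ) = Real.log (2*s) := by
      rw [← Real.log_mul (by norm_num) (by positivity)]
      congr 1
      push_cast
      ring
    rw [h1]
    apply Real.log_le_log (by positivity)
    have : (2*s : ℝ) ≤ 2*s+1 := by linarith
    calc (2*s:ℝ) ≤ 2*s+1 := this
      _ ≤ g (3*s) := by exact_mod_cast hg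
  rw [f, le_div_iff₀ hlog]
  calc (1 + Real.log (2/3) / Real.log ((3*s:ℕ):ℝ)) * Real.log ((3*s:ℕ):ℝ)
      = Real.log (2/3) + Real.log ((3*s:ℕ):ℝ) := by
        rw [add_mul, one_mul, div_mul_cancel₀ _ hlog.ne']; ring
    _ ≤ _ := hkey

end Stmt13Aux

open Stmt13Aux Filter in
theorem stmt_13 :
    Filter.limsup (fun n : ℕ => Real.log (g n) / Real.log n) Filter.atTop = 1 := by
  have hbdd : IsBoundedUnder (· ≤ ·) atTop f :=
    isBoundedUnder_of_eventually_le f_bddAbove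
  have hcobdd : IsCoboundedUnder (· ≤ ·) atTop f :=
    IsCoboundedUnder.of_frequently_ge (Frequently.of_forall f_nonneg)
  have heq : (fun n : ℕ => Real.log (g n) / Real.log n) = f := rfl
  rw [heq]
  apply le_antisymm
  · apply le_of_forall_pos_le_add
    intro ε hε
    apply Filter.limsup_le_of_le hcobdd
    have h0 : Tendsto (fun n : ℕ => Real.log 3 / Real.log n) atTop (nhds 0) :=
      tendsto_const_nhds.div_atTop log_nat_tendsto
    filter_upwards [eventually_ge_atTop 3,
      h0.eventually (eventually_le_nhds hε)] with n hn h0n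
    calc f n ≤ 1 + Real.log 3 / Real.log n := f_upper hn
      _ ≤ 1 + ε := by linarith
  · apply le_of_forall_pos_le_add
    intro ε hε
    have h0 : Tendsto (fun n : ℕ => Real.log (2/3) / Real.log n) atTop (nhds 0) :=
      tendsto_const_nhds.div_atTop log_nat_tendsto
    have hev : ∀ᶠ n : ℕ in atTop, -ε ≤ Real.log (2/3) / Real.log n := by
      have := h0.eventually (eventually_ge_nhds (show -ε < 0 by linarith))
      exact this
    obtain ⟨N, hN⟩ := eventually_atTop.mp hev
    have hfreq : ∃ᶠ n in atTop, 1 - ε ≤ f n := by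
      rw [frequently_atTop]
      intro M
      obtain ⟨s, hs⟩ := exists_s (M + N + 1)
      have hs1 : 1 ≤ s := by
        have : 2^(2*(M+N+1)) ≥ 2^2 := Nat.pow_le_pow_right (by norm_num) (by omega)
        omega
      have hbig : M + N + 1 ≤ 3*s := by
        have h1 : M + N + 1 < 2^(M+N+1) := Nat.lt_two_pow_self
        have h2 : (2:ℕ)^(M+N+1) ≤ 2^(2*(M+N+1)) := Nat.pow_le_pow_right (by norm_num) (by omega)
        omega
      refine ⟨3*s, by omega, ?_⟩
      have hl := f_lower hs1 (g_lower s _ hs)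
      have hN' := hN (3*s) (by omega)
      calc (1:ℝ) - ε ≤ 1 + Real.log (2/3) / Real.log ((3*s:ℕ):ℝ) := by linarith
        _ ≤ f (3*s) := hl
    have := Filter.le_limsup_of_frequently_le hfreq hbdd
    linarith
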